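/- Let p be a natural number and τ₀ ≤ τ₁ ≤ … ≤ τ_{p+1} a nondecreasing sequence of real numbers. For every index j with 0 ≤ j ≤ p such that τ_j < τ_{j+1}, there exists a real polynomial q in one variable of degree at most p such that B[τ₀,…,τ_{p+1}](x) = q(x) for all x ∈ [τ_j, τ_{j+1}) (the B-spline is a piecewise polynomial of degree at most p on the knot intervals). -/

import Mathlib

/-- The Cox–de Boor B-spline of degree `p` with local knot vector `τ₀, …, τ_{p+1}`. -/
noncomputable def coxDeBoor : (p : ℕ) → (Fin (p + 2) → ℝ) → ℝ → ℝ
  | 0, τ, x => if τ 0 ≤ x ∧ x < τ 1 then 1 else 0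
  | p + 1, τ, x =>
      (if τ ⟨p + 1, by omega⟩ - τ 0 = 0 then 0
        else (x - τ 0) / (τ ⟨p + 1, by omega⟩ - τ 0) *
          coxDeBoor p (fun i => τ i.castSucc) x) +
      (if τ ⟨p + 2, by omega⟩ - τ 1 = 0 then 0
        else (τ ⟨p + 2, by omega⟩ - x) / (τ ⟨p + 2, by omega⟩ - τ 1) *
          coxDeBoor p (fun i => τ i.succ) x)

lemma coxDeBoor_zero_of_lt : ∀ (p : ℕ) (τ : Fin (p + 2) → ℝ), Monotone τ →
    ∀ x : ℝ, x < τ 0 → coxDeBoor p τ x = 0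
  | 0, τ, _, x, hx => by
      rw [coxDeBoor, if_neg]
      rintro ⟨h1, _⟩; linarith
  | p + 1, τ, hτ, x, hx => by
      rw [coxDeBoor]
      have h1 := coxDeBoor_zero_of_lt p (fun i => τ i.castSucc)
        (fun _ _ h => hτ (Fin.castSucc_le_castSucc_iff.mpr h)) x hx
      have h01 : τ 0 ≤ τ 1 := hτ (Fin.zero_le 1)
      have hs0 : (fun i : Fin (p + 2) => τ i.succ) 0 = τ 1 := by
        simp
      have h2 := coxDeBoor_zero_of_lt p (fun i => τ i.succ)
        (fun _ _ h => hτ (Fin.succ_le_succ_iff.mpr h)) x (by rw [Fin.succ_zero_eq_one]; linarith)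
      rw [h1, h2]
      split <;> split <;> ring

lemma coxDeBoor_zero_of_ge : ∀ (p : ℕ) (τ : Fin (p + 2) → ℝ), Monotone τ →
    ∀ x : ℝ, τ (Fin.last (p + 1)) ≤ x → coxDeBoor p τ x = 0
  | 0, τ, _, x, hx => by
      rw [coxDeBoor, if_neg]
      rintro ⟨_, h2⟩
      have : τ (Fin.last 1) = τ 1 := rfl
      linarith [this ▸ hx]
  | p + 1, τ, hτ, x, hx => by
      rw [coxDeBoor]
      have key : τ (Fin.last (p + 1)).castSucc ≤ x :=
        le_trans (hτ (Fin.castSucc_le_castSucc_iff.mpr (Fin.le_last _)) |>.trans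
          (hτ Fin.castSucc_lt_succ.le)) hx
      have h1 := coxDeBoor_zero_of_ge p (fun i => τ i.castSucc)
        (fun _ _ h => hτ (Fin.castSucc_le_castSucc_iff.mpr h)) x key
      have h2 := coxDeBoor_zero_of_ge p (fun i => τ i.succ)
        (fun _ _ h => hτ (Fin.succ_le_succ_iff.mpr h)) x hx
      rw [h1, h2]
      split <;> split <;> ring

/-- The B-spline is a piecewise polynomial of degree at most `p` on the knot
intervals: on each nonempty knot interval `[τ_j, τ_{j+1})` it agrees with a real
polynomial of degree at most `p`. -/
theorem coxDeBoor_piecewise_polynomial (p : ℕ) (τ : Fin (p + 2) → ℝ)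
    (hτ : Monotone τ) (j : Fin (p + 1)) (hj : τ j.castSucc < τ j.succ) :
    ∃ q : Polynomial ℝ, q.degree ≤ p ∧
      ∀ x ∈ Set.Ico (τ j.castSucc) (τ j.succ), coxDeBoor p τ x = q.eval x := by
  induction p with
  | zero =>
    refine ⟨1, by simp, fun x hx => ?_⟩
    have hj0 : j = 0 := Fin.fin_one_eq_zero j
    subst hj0
    rw [coxDeBoor, if_pos]
    · simp
    · exact ⟨hx.1, hx.2⟩
  | succ p ih =>
    set τ₁ : Fin (p + 2) → ℝ := fun i => τ i.castSucc with hτ₁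
    set τ₂ : Fin (p + 2) → ℝ := fun i => τ i.succ with hτ₂
    have mono₁ : Monotone τ₁ := fun _ _ h => hτ (Fin.castSucc_le_castSucc_iff.mpr h)
    have mono₂ : Monotone τ₂ := fun _ _ h => hτ (Fin.succ_le_succ_iff.mpr h)
    -- polynomial for the first recursive term
    have A : ∀ j : Fin (p + 2), ∃ q₁ : Polynomial ℝ, q₁.degree ≤ p ∧
        ∀ x ∈ Set.Ico (τ j.castSucc) (τ j.succ), coxDeBoor p τ₁ x = q₁.eval x := by
      intro j
      induction j using Fin.lastCases with
      | last =>
        refine ⟨0, by simp, fun x hx => ?_⟩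
        have hlast : τ₁ (Fin.last (p + 1)) = τ (Fin.last (p + 1)).castSucc := rfl
        rw [coxDeBoor_zero_of_ge p τ₁ mono₁ x (by rw [hlast]; exact hx.1)]
        simp
      | cast i =>
        have e1 : τ₁ i.castSucc = τ i.castSucc.castSucc := rfl
        have e2 : τ₁ i.succ = τ i.castSucc.succ := by
          show τ i.succ.castSucc = τ i.castSucc.succ
          rw [Fin.succ_castSucc]
        rcases lt_or_ge (τ₁ i.castSucc) (τ₁ i.succ) with h | h
        · obtain ⟨q₁, hq₁, hq₁'⟩ := ih τ₁ mono₁ i h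
          exact ⟨q₁, hq₁, fun x hx => hq₁' x (by rw [← e1, ← e2] at hx; exact hx)⟩
        · refine ⟨0, by simp, fun x hx => ?_⟩
          rw [e1, e2] at h
          exact absurd (lt_of_le_of_lt hx.1 hx.2) (not_lt.mpr h)
    have B : ∀ j : Fin (p + 2), ∃ q₂ : Polynomial ℝ, q₂.degree ≤ p ∧
        ∀ x ∈ Set.Ico (τ j.castSucc) (τ j.succ), coxDeBoor p τ₂ x = q₂.eval x := by
      intro j
      induction j using Fin.cases with
      | zero =>
        refine ⟨0, by simp, fun x hx => ?_⟩
        have h0 : τ₂ 0 = τ (0 : Fin (p + 2)).succ := rfl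
        rw [coxDeBoor_zero_of_lt p τ₂ mono₂ x (by rw [h0]; exact hx.2)]
        simp
      | succ k =>
        have e1 : τ₂ k.castSucc = τ k.succ.castSucc := by
          show τ k.castSucc.succ = τ k.succ.castSucc
          rw [Fin.succ_castSucc]
        have e2 : τ₂ k.succ = τ k.succ.succ := rfl
        rcases lt_or_ge (τ₂ k.castSucc) (τ₂ k.succ) with h | h
        · obtain ⟨q₂, hq₂, hq₂'⟩ := ih τ₂ mono₂ k h
          exact ⟨q₂, hq₂, fun x hx => hq₂' x (by rw [← e1, ← e2] at hx; exact hx)⟩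
        · refine ⟨0, by simp, fun x hx => ?_⟩
          rw [e1, e2] at h
          exact absurd (lt_of_le_of_lt hx.1 hx.2) (not_lt.mpr h)
    obtain ⟨q₁, hq₁, hq₁'⟩ := A j
    obtain ⟨q₂, hq₂, hq₂'⟩ := B j
    set a : ℝ := τ ⟨p + 1, by omega⟩ - τ 0 with ha
    set b : ℝ := τ ⟨p + 2, by omega⟩ - τ 1 with hb
    set L₁ : Polynomial ℝ := Polynomial.C a⁻¹ * (Polynomial.X - Polynomial.C (τ 0)) with hL₁
    set L₂ : Polynomial ℝ := Polynomial.C b⁻¹ *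
      (Polynomial.C (τ ⟨p + 2, by omega⟩) - Polynomial.X) with hL₂
    set Q₁ : Polynomial ℝ := if a = 0 then 0 else L₁ * q₁ with hQ₁
    set Q₂ : Polynomial ℝ := if b = 0 then 0 else L₂ * q₂ with hQ₂
    have degL₁ : L₁.degree ≤ 1 := by
      calc L₁.degree ≤ (Polynomial.C a⁻¹).degree + (Polynomial.X - Polynomial.C (τ 0)).degree :=
            Polynomial.degree_mul_le _ _
        _ ≤ 0 + 1 := add_le_add (Polynomial.degree_C_le) (Polynomial.degree_X_sub_C _).le
        _ = 1 := by norm_num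
    have degXC : (Polynomial.C (τ ⟨p + 2, by omega⟩) - Polynomial.X).degree ≤ 1 := by
      rw [show Polynomial.C (τ ⟨p + 2, by omega⟩) - Polynomial.X
          = -(Polynomial.X - Polynomial.C (τ ⟨p + 2, by omega⟩)) from by ring,
        Polynomial.degree_neg]
      exact (Polynomial.degree_X_sub_C _).le
    have degL₂ : L₂.degree ≤ 1 := by
      calc L₂.degree ≤ (Polynomial.C b⁻¹).degree +
            (Polynomial.C (τ ⟨p + 2, by omega⟩) - Polynomial.X).degree :=
            Polynomial.degree_mul_le _ _
        _ ≤ 0 + 1 := add_le_add Polynomial.degree_C_le degXC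
        _ = 1 := by norm_num
    have degQ₁ : Q₁.degree ≤ (p + 1 : ℕ) := by
      rw [hQ₁]; split
      · simp
      · calc (L₁ * q₁).degree ≤ L₁.degree + q₁.degree := Polynomial.degree_mul_le _ _
          _ ≤ 1 + (p : ℕ) := add_le_add degL₁ hq₁
          _ = ((p + 1 : ℕ) : WithBot ℕ) := by
              push_cast; rw [add_comm]
    have degQ₂ : Q₂.degree ≤ (p + 1 : ℕ) := by
      rw [hQ₂]; split
      · simp
      · calc (L₂ * q₂).degree ≤ L₂.degree + q₂.degree := Polynomial.degree_mul_le _ _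
          _ ≤ 1 + (p : ℕ) := add_le_add degL₂ hq₂
          _ = ((p + 1 : ℕ) : WithBot ℕ) := by
              push_cast; rw [add_comm]
    refine ⟨Q₁ + Q₂, le_trans (Polynomial.degree_add_le _ _) (max_le degQ₁ degQ₂),
      fun x hx => ?_⟩
    rw [coxDeBoor]
    simp only [Polynomial.eval_add, hQ₁, hQ₂]
    congr 1
    · split
      · simp
      · rw [hq₁' x hx, hL₁]
        simp only [Polynomial.eval_mul, Polynomial.eval_sub, Polynomial.eval_C,
          Polynomial.eval_X]
        rw [div_eq_inv_mul]
    · split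
      · simp
      · rw [hq₂' x hx, hL₂]
        simp only [Polynomial.eval_mul, Polynomial.eval_sub, Polynomial.eval_C,
          Polynomial.eval_X]
        rw [div_eq_inv_mul]
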